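/- For v ∈ H¹(K;ℝ²) on a bounded domain K ⊂ ℝ², the modified strain energy satisfies ‖ε*(v)‖²_{L²(K)} = ‖∇v‖²_{L²(K)} - ½‖Π₀ rot v‖²_{L²(K)} ≥ ½‖∇v‖²_{L²(K)}, so that ‖∇v‖_{L²(K)} ≤ √2 ‖ε*(v)‖_{L²(K)}. -/

import Mathlib

open MeasureTheory Real

noncomputable def grad2 (u : (Fin 2 → ℝ) → (Fin 2 → ℝ)) (x : Fin 2 → ℝ) :
    Matrix (Fin 2) (Fin 2) ℝ :=
  fun i j => fderiv ℝ u x (Pi.single j 1) i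

noncomputable def rot2 (u : (Fin 2 → ℝ) → (Fin 2 → ℝ)) (x : Fin 2 → ℝ) : ℝ :=
  grad2 u x 1 0 - grad2 u x 0 1

def Xmat : Matrix (Fin 2) (Fin 2) ℝ := !![0, -1; 1, 0]

def frob (A B : Matrix (Fin 2) (Fin 2) ℝ) : ℝ := ∑ i, ∑ j, A i j * B i j

noncomputable def Pi0 (K : Set (Fin 2 → ℝ)) (f : (Fin 2 → ℝ) → ℝ) : ℝ :=
  (∫ x in K, f x) / (volume K).toReal

noncomputable def epsStar (K : Set (Fin 2 → ℝ)) (v : (Fin 2 → ℝ) → (Fin 2 → ℝ))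
    (x : Fin 2 → ℝ) : Matrix (Fin 2) (Fin 2) ℝ :=
  grad2 v x - (Pi0 K (rot2 v) / 2) • Xmat

/-- ‖ε*(v)‖² = ‖∇v‖² - ½‖Π₀ rot v‖², together with ½‖Π₀ rot v‖² ≤ ‖∇v‖². -/
theorem stmt4 (K : Set (Fin 2 → ℝ)) (hK : MeasurableSet K)
    (h0 : volume K ≠ 0) (htop : volume K ≠ ⊤)
    (v : (Fin 2 → ℝ) → (Fin 2 → ℝ))
    (hv : ∀ x ∈ K, DifferentiableAt ℝ v x)
    (hrv : IntegrableOn (rot2 v) K)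
    (hrv2 : IntegrableOn (fun x => (rot2 v x) ^ 2) K)
    (hgg : IntegrableOn (fun x => frob (grad2 v x) (grad2 v x)) K) :
    (∫ x in K, frob (epsStar K v x) (epsStar K v x)
      = (∫ x in K, frob (grad2 v x) (grad2 v x))
        - (1 / 2) * ∫ x in K, (Pi0 K (rot2 v)) ^ 2)
    ∧ (1 / 2) * (∫ x in K, (Pi0 K (rot2 v)) ^ 2)
        ≤ ∫ x in K, frob (grad2 v x) (grad2 v x) := by
  set c := Pi0 K (rot2 v) with hc
  set M := (volume K).toReal with hM
  have hMpos : 0 < M := ENNReal.toReal_pos h0 htop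
  have hint : ∫ x in K, rot2 v x = c * M := by
    rw [hc]; unfold Pi0; rw [← hM, div_mul_cancel₀ _ hMpos.ne']
  -- pointwise identity
  have hpw : ∀ x, frob (epsStar K v x) (epsStar K v x)
      = frob (grad2 v x) (grad2 v x) - c * rot2 v x + c ^ 2 / 2 := by
    intro x
    simp [epsStar, frob, Xmat, rot2, Fin.sum_univ_two, Matrix.sub_apply,
      Matrix.smul_apply, smul_eq_mul, ← hc]
    ring
  have hconst : IntegrableOn (fun _ : Fin 2 → ℝ => c ^ 2 / 2) K :=
    integrableOn_const htop
  have hcrot : IntegrableOn (fun x => c * rot2 v x) K := hrv.const_mul c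
  have hconstInt : ∫ x in K, (c : ℝ) ^ 2 = c ^ 2 * M := by
    rw [setIntegral_const, smul_eq_mul, mul_comm]; rfl
  have key : ∫ x in K, frob (epsStar K v x) (epsStar K v x)
      = (∫ x in K, frob (grad2 v x) (grad2 v x)) - (1 / 2) * (c ^ 2 * M) := by
    calc ∫ x in K, frob (epsStar K v x) (epsStar K v x)
        = ∫ x in K, (frob (grad2 v x) (grad2 v x) - c * rot2 v x + c ^ 2 / 2) := by
          simp_rw [hpw]
      _ = (∫ x in K, frob (grad2 v x) (grad2 v x)) - (∫ x in K, c * rot2 v x)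
            + ∫ x in K, (c ^ 2 / 2 : ℝ) := by
          have hsub : IntegrableOn
              (fun x => frob (grad2 v x) (grad2 v x) - c * rot2 v x) K := hgg.sub hcrot
          rw [integral_add hsub hconst, integral_sub hgg hcrot]
      _ = (∫ x in K, frob (grad2 v x) (grad2 v x)) - c * (c * M) + (c ^ 2 / 2) * M := by
          rw [integral_const_mul, hint, setIntegral_const, smul_eq_mul, measureReal_def, ← hM]; ring
      _ = (∫ x in K, frob (grad2 v x) (grad2 v x)) - (1 / 2) * (c ^ 2 * M) := by ring
  constructor
  · rw [key, hconstInt]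
  · -- inequality
    have hvar : 0 ≤ ∫ x in K, (rot2 v x - c) ^ 2 :=
      setIntegral_nonneg hK (fun x _ => sq_nonneg _)
    have hexp : ∫ x in K, (rot2 v x - c) ^ 2
        = (∫ x in K, (rot2 v x) ^ 2) - c ^ 2 * M := by
      have : ∀ x, (rot2 v x - c) ^ 2 = (rot2 v x) ^ 2 - (2 * c) * rot2 v x + c ^ 2 := by
        intro x; ring
      simp_rw [this]
      have hsub2 : IntegrableOn
          (fun x => (rot2 v x) ^ 2 - (2 * c) * rot2 v x) K :=
        hrv2.sub (hrv.const_mul (2 * c))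
      rw [integral_add hsub2 (integrableOn_const htop),
        integral_sub hrv2 (hrv.const_mul (2 * c)), integral_const_mul, hint,
        setIntegral_const, smul_eq_mul, measureReal_def, ← hM]
      ring
    have h1 : c ^ 2 * M ≤ ∫ x in K, (rot2 v x) ^ 2 := by linarith [hexp ▸ hvar]
    have h2 : ∫ x in K, (rot2 v x) ^ 2 ≤ ∫ x in K, 2 * frob (grad2 v x) (grad2 v x) := by
      apply setIntegral_mono_on hrv2 (hgg.const_mul 2) hK
      intro x _
      simp only [frob, rot2, Fin.sum_univ_two]
      nlinarith [sq_nonneg (grad2 v x 1 0 + grad2 v x 0 1), sq_nonneg (grad2 v x 0 0),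
        sq_nonneg (grad2 v x 1 1)]
    rw [integral_const_mul] at h2
    rw [hconstInt]
    linarith
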